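/- Let U be a group with a G-action, with descending central series U¹ = U, U^{i+1} = [U, U^i], and quotients U_n = U/U^{n+1}. Suppose H⁰(G, U^i/U^{i+1}) = 0 (trivial fixed points) for every i ≥ 1. Then H⁰(G, U_n) = 0 for every n, i.e. the only G-fixed element of U_n is the identity. The same holds for any twisted G-action by a 1-cocycle with values in a central quotient, provided the twisted fixed points of each graded piece vanish. -/

import Mathlib

/-- If, for each `i`, the graded piece
`(lowerCentralSeries U i)/(lowerCentralSeries U (i+1))` has no nontrivial
`G`-fixed points (stated elementwise), then `H⁰(G, U/U^{n+1}) = 0` for every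
`n`: any `u` whose class in `U/lowerCentralSeries U n` is `G`-fixed lies in
`lowerCentralSeries U n`. -/
theorem fixed_points_of_nilpotent_quotients_trivial
    {G U : Type*} [Group G] [Group U] [MulDistribMulAction G U]
    (h : ∀ i : ℕ, ∀ u ∈ (⊤ : Subgroup U).lowerCentralSeries i,
      (∀ g : G, (g • u) * u⁻¹ ∈ (⊤ : Subgroup U).lowerCentralSeries (i + 1)) →
        u ∈ (⊤ : Subgroup U).lowerCentralSeries (i + 1))
    (n : ℕ) (u : U) (hu : ∀ g : G, (g • u) * u⁻¹ ∈ (⊤ : Subgroup U).lowerCentralSeries n) :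
    u ∈ (⊤ : Subgroup U).lowerCentralSeries n := by
  induction n with
  | zero => simp [Subgroup.lowerCentralSeries]
  | succ n ih =>
    have hn : u ∈ (⊤ : Subgroup U).lowerCentralSeries n :=
      ih fun g => Subgroup.lowerCentralSeries_antitone _ (Nat.le_succ n) (hu g)
    exact h n u hn hu
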